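/- Let G ≤ GL(n,F) be a group, U a nonzero proper G-invariant subspace of V = F^n, and ρ_U: G → GL(U) × GL(V/U) the map sending g to its induced actions on U and V/U. Then G is finite if and only if ρ_U(G) is finite, provided F has characteristic p > 0 and G is finitely generated. -/

import Mathlib

open scoped MatrixGroups Matrix

private lemma matrix_eq_zero_of_mulVec' {F : Type*} [Field F] {n : ℕ}
    {M : Matrix (Fin n) (Fin n) F} (h : ∀ v, M *ᵥ v = 0) : M = 0 :=
  Matrix.toLin'.injective (by ext v; simp [h])

/-- Let `F` be a field of characteristic `p > 0`, `G ≤ GL(n,F)`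
finitely generated, and `U` a nonzero proper `G`-invariant subspace of `V = F^n`.  Let
`ρ_U` send `g ∈ G` to the pair of induced actions on `U` and on `V/U`.  Then `G` is
finite if and only if `ρ_U(G)` is finite. -/
theorem finite_iff_block_diagonal_image_finite
    {p : ℕ} [Fact p.Prime] {F : Type*} [Field F] [CharP F p] {n : ℕ}
    (G : Subgroup (GL (Fin n) F)) [Group.FG G]
    (U : Submodule F (Fin n → F)) (hU0 : U ≠ ⊥) (hU1 : U ≠ ⊤)
    (hU : ∀ g : G, ∀ v ∈ U,
      Matrix.mulVecLin (((g : GL (Fin n) F)) : Matrix (Fin n) (Fin n) F) v ∈ U) :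
    Finite G ↔
      Set.Finite (Set.range fun g : G =>
        ((Matrix.mulVecLin (((g : GL (Fin n) F)) : Matrix (Fin n) (Fin n) F)).restrict (hU g),
         Submodule.mapQ U U
           (Matrix.mulVecLin (((g : GL (Fin n) F)) : Matrix (Fin n) (Fin n) F))
           (fun v hv => hU g v hv))) := by
  classical
  have hp := Fact.out (p := p.Prime)
  -- `n` is positive since `U ≠ ⊥`
  haveI hn : Nonempty (Fin n) := by
    rcases Nat.eq_zero_or_pos n with h0 | h0
    · subst h0
      exact absurd (Subsingleton.elim U ⊥) hU0
    · exact ⟨⟨0, h0⟩⟩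
  constructor
  · intro _
    exact Set.finite_range _
  intro hfin
  -- the matrix of `g` and its action
  set A : G → Module.End F (Fin n → F) := fun g =>
    Matrix.mulVecLin (((g : GL (Fin n) F)) : Matrix (Fin n) (Fin n) F) with hA
  have hA1 : A 1 = LinearMap.id := by
    simp [hA]
  have hAmul : ∀ g h : G, A (g * h) = (A g).comp (A h) := by
    intro g h
    simp [hA, Units.val_mul, Matrix.mulVecLin_mul]
  -- the block-diagonal monoid homomorphism
  let f : G →* (Module.End F U) × (Module.End F ((Fin n → F) ⧸ U)) :=
    { toFun := fun g =>
        ((A g).restrict (hU g), Submodule.mapQ U U (A g) (fun v hv => hU g v hv)),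
      map_one' := by
        refine Prod.ext ?_ ?_
        · refine LinearMap.ext fun x => Subtype.ext ?_
          simp [LinearMap.restrict_apply, hA1]
        · refine Submodule.linearMap_qext _ (LinearMap.ext fun v => ?_)
          simp [Submodule.mapQ_apply, hA1]
      map_mul' := by
        intro g h
        refine Prod.ext ?_ ?_
        · refine LinearMap.ext fun x => Subtype.ext ?_
          simp [LinearMap.restrict_apply, hAmul, Module.End.mul_apply]
        · refine Submodule.linearMap_qext _ (LinearMap.ext fun v => ?_)
          simp [Submodule.mapQ_apply, hAmul, Module.End.mul_apply] }
  have hrange : Set.Finite (Set.range ⇑f) := hfin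
  -- lift to units
  let φ : G →* ((Module.End F U) × (Module.End F ((Fin n → F) ⧸ U)))ˣ := f.toHomUnits
  have hφrange : Set.Finite (Set.range ⇑φ) := by
    refine Set.Finite.of_finite_image (f := Units.val) ?_
      (Function.Injective.injOn Units.val_injective)
    rw [← Set.range_comp]
    have : Units.val ∘ ⇑φ = ⇑f := funext fun g => f.coe_toHomUnits g
    rw [this]; exact hrange
  haveI : Finite φ.range := by
    have h : (φ.range : Set ((Module.End F U) × (Module.End F ((Fin n → F) ⧸ U)))ˣ).Finite := by
      rw [MonoidHom.coe_range]; exact hφrange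
    exact h.to_subtype
  haveI hquot : Finite (G ⧸ φ.ker) :=
    Finite.of_equiv _ (QuotientGroup.quotientKerEquivRange φ).symm.toEquiv
  haveI : φ.ker.FiniteIndex := φ.ker.finiteIndex_of_finite_quotient
  haveI : Group.FG φ.ker := Subgroup.fg_of_index_ne_zero _
  -- characterization of the kernel
  have hker : ∀ g : G, g ∈ φ.ker →
      (∀ u ∈ U, A g u = u) ∧ (∀ v, A g v - v ∈ U) := by
    intro g hg
    have hfg : f g = 1 := by
      rw [← f.coe_toHomUnits g, show f.toHomUnits g = 1 from hg, Units.val_one]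
    have hfg1 : (A g).restrict (hU g) = 1 := congrArg Prod.fst hfg
    have hfg2 : Submodule.mapQ U U (A g) (fun v hv => hU g v hv) = 1 :=
      congrArg Prod.snd hfg
    constructor
    · intro u hu
      have h2 := LinearMap.congr_fun hfg1 ⟨u, hu⟩
      simpa [LinearMap.restrict_apply, Subtype.ext_iff] using h2
    · intro v
      have h2 := LinearMap.congr_fun hfg2 (Submodule.Quotient.mk v)
      rw [Submodule.mapQ_apply] at h2
      simpa [Submodule.Quotient.eq] using h2
  -- matrix computations in the kernel
  set M : G → Matrix (Fin n) (Fin n) F :=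
    fun g => (((g : GL (Fin n) F)) : Matrix (Fin n) (Fin n) F) with hM
  have key : ∀ g ∈ φ.ker, ∀ h ∈ φ.ker, (M g - 1) * (M h - 1) = 0 := by
    intro g hg h hh
    apply matrix_eq_zero_of_mulVec'
    intro v
    rw [← Matrix.mulVec_mulVec]
    have h1 : (M h - 1) *ᵥ v = A h v - v := by
      simp [Matrix.sub_mulVec, Matrix.one_mulVec, hA, hM]
    have h2 : A h v - v ∈ U := (hker h hh).2 v
    rw [h1]
    have h3 : A g (A h v - v) = A h v - v := (hker g hg).1 _ h2
    have : (M g - 1) *ᵥ (A h v - v) = A g (A h v - v) - (A h v - v) := by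
      simp [Matrix.sub_mulVec, Matrix.one_mulVec, hA, hM]
    rw [this, h3, sub_self]
  -- elements of the kernel have order dividing p
  have hpow : ∀ g : φ.ker, g ^ p = 1 := by
    intro g
    have hk : (g : G) ∈ φ.ker := g.2
    refine Subtype.ext (Subtype.ext (Units.ext ?_))
    have hcoe : ((((g : G) : GL (Fin n) F) ^ p : GL (Fin n) F) : Matrix (Fin n) (Fin n) F)
        = (M (g : G)) ^ p := by
      simp [hM]
    have hsq : (M (g : G) - 1) ^ 2 = 0 := by
      rw [sq]; exact key _ hk _ hk
    have hNp : (M (g : G) - 1) ^ p = 0 := by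
      have : (M (g : G) - 1) ^ p = (M (g : G) - 1) ^ 2 * (M (g : G) - 1) ^ (p - 2) := by
        rw [← pow_add]; congr 1; have := hp.two_le; omega
      rw [this, hsq, zero_mul]
    have hMg : M (g : G) = 1 + (M (g : G) - 1) := by abel
    calc ((((g : G) : GL (Fin n) F) ^ p : GL (Fin n) F) : Matrix (Fin n) (Fin n) F)
        = (M (g : G)) ^ p := hcoe
      _ = (1 + (M (g : G) - 1)) ^ p := by rw [← hMg]
      _ = 1 ^ p + (M (g : G) - 1) ^ p :=
          add_pow_char_of_commute p (Commute.one_left _)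
      _ = 1 := by rw [hNp, one_pow, add_zero]
  -- the kernel is abelian
  letI : CommGroup φ.ker :=
    { (inferInstance : Group φ.ker) with
      mul_comm := by
        intro a b
        refine Subtype.ext (Subtype.ext (Units.ext ?_))
        have ha : ((a : G) : GL (Fin n) F).1 = M (a : G) := rfl
        have e1 : M (a : G) * M (b : G)
            = (M (a : G) - 1) * (M (b : G) - 1) + M (a : G) + M (b : G) - 1 := by
          noncomm_ring
        have e2 : M (b : G) * M (a : G)
            = (M (b : G) - 1) * (M (a : G) - 1) + M (b : G) + M (a : G) - 1 := by
          noncomm_ring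
        show M ((a : G) * (b : G)) = M ((b : G) * (a : G))
        have hab : M ((a : G) * (b : G)) = M (a : G) * M (b : G) := by simp [hM]
        have hba : M ((b : G) * (a : G)) = M (b : G) * M (a : G) := by simp [hM]
        rw [hab, hba, e1, e2, key _ a.2 _ b.2, key _ b.2 _ a.2]
        abel }
  -- the kernel is torsion, hence finite
  have htor : Monoid.IsTorsion φ.ker := by
    intro g
    exact isOfFinOrder_iff_pow_eq_one.mpr ⟨p, hp.pos, hpow g⟩
  haveI hKfin : Finite φ.ker := CommGroup.finite_of_fg_torsion _ htor
  exact Finite.of_equiv _ (Subgroup.groupEquivQuotientProdSubgroup (s := φ.ker)).symm
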